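/- Let d, n be natural numbers with 1 ≤ n < d, let ε_1, …, ε_n ∈ ℝ^d, and let p : ℝ^d → ℝ be strictly positive everywhere. Then for every M ∈ ℝ there exist μ ∈ ℝ^d and a lower-triangular matrix L ∈ ℝ^{d×d} with strictly positive diagonal entries (hence invertible) such that (1/n) · Σ_{i=1}^n [ log p(μ + L ε_i) − log q_{μ,L}(μ + L ε_i) ] > M, where log q_{μ,L}(z) = −(d/2)·log(2π) − log(det L) − (1/2)·‖L⁻¹(z − μ)‖². In other words, the sample-average-approximation ELBO objective over Gaussian variational parameters θ = (μ, L Lᵀ) is unbounded above whenever the sample size n is smaller than the dimension d. -/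

import Mathlib

open scoped BigOperators

/-- The SAA ELBO objective over Gaussian variational parameters `θ = (μ, L Lᵀ)` is
unbounded above whenever the sample size `n` is smaller than the dimension `d`.
Here `log q_{μ,L}(z) = -(d/2)·log(2π) - log(det L) - (1/2)·‖L⁻¹(z-μ)‖²`. -/
theorem saa_elbo_unbounded (d n : ℕ) (hn : 1 ≤ n) (hnd : n < d)
    (ε : Fin n → (Fin d → ℝ))
    (p : (Fin d → ℝ) → ℝ) (hp : ∀ z, 0 < p z) (M : ℝ) :
    ∃ (μ : Fin d → ℝ) (L : Matrix (Fin d) (Fin d) ℝ),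
      (∀ j k : Fin d, j < k → L j k = 0) ∧
      (∀ j : Fin d, 0 < L j j) ∧
      (1 / (n : ℝ)) * ∑ i : Fin n,
        (Real.log (p (μ + L.mulVec (ε i))) -
          (-(((d : ℝ) / 2) * Real.log (2 * Real.pi)) - Real.log L.det -
            (1 / 2) * ∑ j : Fin d, ((L⁻¹).mulVec ((μ + L.mulVec (ε i)) - μ)) j ^ 2)) > M := by
  -- Find a nonzero vector g orthogonal to all ε i.
  have hnotli : ¬ LinearIndependent ℝ (fun j : Fin d => (fun i => ε i j : Fin n → ℝ)) := by
    intro h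
    have := h.fintype_card_le_finrank
    simp [Module.finrank_pi] at this
    omega
  obtain ⟨g, hg0, j1, hj1⟩ := Fintype.not_linearIndependent_iff.mp hnotli
  have hgrel : ∀ i : Fin n, ∑ j : Fin d, g j * ε i j = 0 := by
    intro i
    have := congrFun hg0 i
    simpa [Finset.sum_apply] using this
  -- j0 : the largest index with g j0 ≠ 0
  set S : Finset (Fin d) := Finset.univ.filter (fun j => g j ≠ 0) with hS
  have hSne : S.Nonempty := ⟨j1, by simp [hS, hj1]⟩
  set j0 : Fin d := S.max' hSne with hj0def
  have hgj0 : g j0 ≠ 0 := by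
    have := S.max'_mem hSne
    simpa [hS] using this
  have hgzero : ∀ k : Fin d, j0 < k → g k = 0 := by
    intro k hk
    by_contra h
    have : k ∈ S := by simp [hS, h]
    exact absurd (S.le_max' k this) (not_le.mpr hk)
  set β : Fin d → ℝ := fun k => g k / g j0 with hβ
  have hβj0 : β j0 = 1 := by rw [hβ]; exact div_self hgj0
  have hβzero : ∀ k : Fin d, j0 < k → β k = 0 := by
    intro k hk; simp [hβ, hgzero k hk]
  have hβrel : ∀ i : Fin n, ∑ j : Fin d, β j * ε i j = 0 := by
    intro i
    have : ∑ j : Fin d, β j * ε i j = (∑ j : Fin d, g j * ε i j) / g j0 := by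
      rw [Finset.sum_div]
      exact Finset.sum_congr rfl fun j _ => div_mul_eq_mul_div _ _ _
    rw [this, hgrel i, zero_div]
  -- constants
  have hn0 : (0 : ℝ) < n := by exact_mod_cast hn
  set C : ℝ := ∑ i : Fin n, (Real.log (p (ε i)) + ((d : ℝ) / 2) * Real.log (2 * Real.pi)
      + (1 / 2) * ∑ j : Fin d, ε i j ^ 2) with hC
  set T : ℝ := M - C / n + 1 with hT
  set t : ℝ := Real.exp T with ht
  have ht1 : 0 < t := Real.exp_pos T
  -- the matrix
  set L : Matrix (Fin d) (Fin d) ℝ := fun j k =>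
    if j = j0 then (if k = j0 then t else (t - 1) * β k)
    else (if j = k then 1 else 0) with hL
  have hlow : ∀ j k : Fin d, j < k → L j k = 0 := by
    intro j k hjk
    by_cases hj : j = j0
    · subst hj
      have hk : k ≠ j0 := fun h => absurd hjk (by simp [h])
      simp [hL, hk, hβzero k hjk]
    · simp [hL, hj, (ne_of_lt hjk)]
  have hdiagval : ∀ j : Fin d, L j j = if j = j0 then t else 1 := by
    intro j
    by_cases hj : j = j0 <;> simp [hL, hj]
  have hdiag : ∀ j : Fin d, 0 < L j j := by
    intro j; rw [hdiagval j]; split <;> [exact ht1; norm_num]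
  -- determinant
  have hdet : L.det = t := by
    rw [Matrix.det_of_lowerTriangular L (by
      intro j k h
      exact hlow j k (by simpa using h))]
    rw [Finset.prod_congr rfl (fun j _ => hdiagval j)]
    simp
  -- L fixes each ε i
  have hmul : ∀ i : Fin n, L.mulVec (ε i) = ε i := by
    intro i
    funext j
    by_cases hj : j = j0
    · subst hj
      have : ∀ k : Fin d, L j0 k = (t - 1) * β k + (if k = j0 then 1 else 0) := by
        intro k
        by_cases hk : k = j0 <;> simp [hL, hk, hβj0] <;> ring
      simp only [Matrix.mulVec, dotProduct]
      calc ∑ k : Fin d, L j0 k * ε i k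
          = ∑ k : Fin d, ((t - 1) * (β k * ε i k) + (if k = j0 then 1 else 0) * ε i k) := by
            refine Finset.sum_congr rfl fun k _ => by rw [this k]; ring
        _ = (t - 1) * (∑ k : Fin d, β k * ε i k) + ∑ k : Fin d, (if k = j0 then 1 else 0) * ε i k := by
            rw [Finset.sum_add_distrib, Finset.mul_sum]
        _ = ε i j0 := by
            rw [hβrel i]
            simp [Finset.sum_ite_eq']
    · simp only [Matrix.mulVec, dotProduct, hL, if_neg hj]
      simp [Finset.sum_ite_eq]
  -- inverse acts as identity on ε i
  have hdetunit : IsUnit L.det := by rw [hdet]; exact (isUnit_iff_ne_zero).mpr (ne_of_gt ht1)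
  have hinvmul : ∀ i : Fin n, (L⁻¹).mulVec (L.mulVec (ε i)) = ε i := by
    intro i
    rw [Matrix.mulVec_mulVec, Matrix.nonsing_inv_mul L hdetunit, Matrix.one_mulVec]
  refine ⟨0, L, hlow, hdiag, ?_⟩
  have hsimp : ∀ i : Fin n,
      (Real.log (p ((0 : Fin d → ℝ) + L.mulVec (ε i))) -
        (-(((d : ℝ) / 2) * Real.log (2 * Real.pi)) - Real.log L.det -
          (1 / 2) * ∑ j : Fin d, ((L⁻¹).mulVec (((0 : Fin d → ℝ) + L.mulVec (ε i)) - 0)) j ^ 2))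
      = Real.log (p (ε i)) + ((d : ℝ) / 2) * Real.log (2 * Real.pi)
          + (1 / 2) * ∑ j : Fin d, ε i j ^ 2 + T := by
    intro i
    have hinv' : (L⁻¹).mulVec (ε i) = ε i := by
      have := hinvmul i; rwa [hmul i] at this
    simp only [zero_add, sub_zero, hmul i, hinv', hdet, ht, Real.log_exp]
    ring
  rw [Finset.sum_congr rfl (fun i _ => hsimp i)]
  rw [Finset.sum_add_distrib, ← hC, Finset.sum_const]
  simp only [Finset.card_univ, Fintype.card_fin, nsmul_eq_mul]
  have : (1 / (n : ℝ)) * (C + n * T) = C / n + T := by field_simp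
  rw [this, hT]
  linarith
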